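/- There exists h ∈ K with σ(h) = h such that, setting y := h^p, one has: y ∉ k, the field K is generated over k by x and y (K = k(x, y)), and y does not lie in the k-linear span of {1, x}. -/

import Mathlib

set_option synthInstance.maxHeartbeats 1000000
set_option maxHeartbeats 2000000

open IntermediateField Polynomial Module




lemma aux1 (k K : Type*) [Field k] [Field K] [Algebra k K] (σ : K ≃ₐ[k] K)
    (hord : (orderOf σ).Prime) :
    ∃ S : Subfield K, (∀ a : K, a ∈ S ↔ σ a = a) ∧ FiniteDimensional ↥S K ∧
      Module.finrank ↥S K = orderOf σ := by
  classical
  set G := Subgroup.zpowers σ with hG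
  have hcard : Nat.card G = orderOf σ := Nat.card_zpowers σ
  haveI hGfin : Finite G := by
    have : 0 < Nat.card G := by rw [hcard]; exact hord.pos
    exact (Nat.card_pos_iff.mp this).2
  haveI : Fintype G := Fintype.ofFinite G
  haveI : FaithfulSMul G K := by
    constructor
    intro g₁ g₂ h
    refine Subtype.ext (AlgEquiv.ext fun a => ?_)
    exact h (a := a)
  refine ⟨FixedPoints.subfield G K, ?_, inferInstance, ?_⟩
  · intro a
    constructor
    · intro ha
      have := ha ⟨σ, Subgroup.mem_zpowers σ⟩
      simpa [Submonoid.smul_def, AlgEquiv.smul_def] using this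
    · intro ha g
      obtain ⟨g, hg⟩ := g
      obtain ⟨n, hn⟩ := Subgroup.mem_zpowers_iff.mp hg
      have hnat : ∀ m : ℕ, (σ ^ m) a = a := by
        intro m
        induction m with
        | zero => simp
        | succ m ih => rw [pow_succ, AlgEquiv.mul_apply, ha, ih]
      have hint : (σ ^ n) a = a := by
        rcases n with m | m
        · simpa using hnat m
        · have h1 : σ ^ Int.negSucc m = (σ ^ (m + 1))⁻¹ := by
            rw [Int.negSucc_eq, zpow_neg]
            norm_cast
          rw [h1]
          show (σ ^ (m + 1)).symm a = a
          exact (AlgEquiv.symm_apply_eq _).mpr (hnat (m + 1)).symm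
      show (⟨g, hg⟩ : G) • a = a
      rw [Submonoid.smul_def]
      subst hn
      simpa [AlgEquiv.smul_def] using hint
  · rw [FixedPoints.finrank_eq_card, ← Nat.card_eq_fintype_card, hcard]


lemma aux2 (K : Type*) [Field K] (S : Subfield K) [FiniteDimensional ↥S K]
    (hprime : (Module.finrank ↥S K).Prime) (x : K) (hx : x ∉ S) :
    ∀ a : K, a ∈ IntermediateField.adjoin ↥S ({x} : Set K) := by
  set E := IntermediateField.adjoin ↥S ({x} : Set K) with hE
  have hmul : finrank ↥S ↥E * finrank ↥E K = finrank ↥S K :=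
    Module.finrank_mul_finrank ↥S ↥E K
  have hne1 : finrank ↥S ↥E ≠ 1 := by
    intro h1
    have hbot : E = ⊥ := IntermediateField.finrank_eq_one_iff.mp h1
    have hxE : x ∈ E := IntermediateField.subset_adjoin _ _ rfl
    rw [hbot, IntermediateField.mem_bot] at hxE
    obtain ⟨s, hs⟩ := hxE
    exact hx (hs ▸ s.2)
  have hdvd : finrank ↥S ↥E ∣ finrank ↥S K := ⟨_, hmul.symm⟩
  have heq : finrank ↥S ↥E = finrank ↥S K :=
    ((hprime.eq_one_or_self_of_dvd _ hdvd).resolve_left hne1)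
  have hEK : finrank ↥E K = 1 := by
    have hpos : 0 < finrank ↥S K := hprime.pos
    have := hmul
    rw [heq] at this
    nlinarith [this]
  haveI : FiniteDimensional ↥E K := FiniteDimensional.right ↥S ↥E K
  have hbt : (⊥ : Subalgebra ↥E K) = ⊤ := Subalgebra.bot_eq_top_iff_finrank_eq_one.mpr hEK
  intro a
  have : a ∈ (⊥ : Subalgebra ↥E K) := hbt.symm ▸ Algebra.mem_top
  obtain ⟨e, he⟩ := this
  exact he ▸ e.2



lemma aux3 {k K : Type*} [Field k] [Field K] [Algebra k K] (p : ℕ) [Fact p.Prime] [CharP K p]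
    (L T : IntermediateField k K) (hLT : L ≤ T)
    [FiniteDimensional ↥L K] [Algebra.IsSeparable ↥L K]
    (h : K) (hyT : h ^ p ∈ T) : h ∈ T := by
  letI : Algebra ↥L ↥T := (IntermediateField.inclusion hLT).toAlgebra
  haveI : IsScalarTower ↥L ↥T K := IsScalarTower.of_algebraMap_eq (fun l => rfl)
  have hsep : IsSeparable ↥T h :=
    IsSeparable.tower_top ↥T (Algebra.IsSeparable.isSeparable ↥L h)
  have hint : IsIntegral ↥T h := (IsIntegral.of_finite ↥L h).tower_top
  set m := minpoly ↥T h with hm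
  have hmonic : m.Monic := minpoly.monic hint
  have hdvd : m ∣ (X ^ p - C (⟨h ^ p, hyT⟩ : ↥T)) := by
    apply minpoly.dvd
    have : (algebraMap ↥T K) (⟨h ^ p, hyT⟩ : ↥T) = h ^ p := rfl
    simp [map_sub, map_pow, this]
  have hmap : m.map (algebraMap ↥T K) ∣ (X - C h) ^ p := by
    have hd := Polynomial.map_dvd (algebraMap ↥T K) hdvd
    rw [Polynomial.map_sub, Polynomial.map_pow, map_X, map_C] at hd
    have hc : (algebraMap ↥T K) (⟨h ^ p, hyT⟩ : ↥T) = h ^ p := rfl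
    rw [hc] at hd
    have : (X - C h) ^ p = X ^ p - C (h ^ p) := by
      rw [sub_pow_char, ← C_pow]
    rwa [this]
  have hsq : Squarefree (m.map (algebraMap ↥T K)) :=
    (Polynomial.Separable.map hsep).squarefree
  have hprime : Prime (X - C h) := prime_X_sub_C h
  obtain ⟨i, hip, hassoc⟩ := (dvd_prime_pow hprime p).mp hmap
  have hdeg : (m.map (algebraMap ↥T K)).natDegree = m.natDegree :=
    natDegree_map_eq_of_injective (algebraMap ↥T K).injective m
  have hdegpos : 0 < m.natDegree := minpoly.natDegree_pos hint
  have hi1 : i = 1 := by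
    rcases i with _ | _ | i
    · exfalso
      rw [pow_zero] at hassoc
      have : IsUnit (m.map (algebraMap ↥T K)) := associated_one_iff_isUnit.mp hassoc
      have := natDegree_eq_zero_of_isUnit this
      omega
    · rfl
    · exfalso
      have hdvd2 : (X - C h) * (X - C h) ∣ m.map (algebraMap ↥T K) := by
        have h1 : (X - C h) * (X - C h) ∣ (X - C h) ^ (i + 1 + 1) := by
          rw [← pow_two]
          exact pow_dvd_pow _ (by omega)
        exact h1.trans hassoc.symm.dvd
      exact not_isUnit_X_sub_C h (hsq _ hdvd2)
  subst hi1
  rw [pow_one] at hassoc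
  have heq : m.map (algebraMap ↥T K) = X - C h :=
    Polynomial.eq_of_monic_of_associated (hmonic.map _) (monic_X_sub_C h) hassoc
  have hc0 : algebraMap ↥T K (m.coeff 0) = -h := by
    have := congrArg (fun f : K[X] => f.coeff 0) heq
    simpa [coeff_map] using this
  have : h = algebraMap ↥T K (-(m.coeff 0)) := by rw [map_neg, hc0, neg_neg]
  rw [this]
  exact (-(m.coeff 0) : ↥T).2


theorem stmt9 (k K : Type*) [Field k] [IsAlgClosed k] [Field K] [Algebra k K]
    (p : ℕ) (hp : 0 < p) [CharP k p]
    (x : K) (hx : Transcendental k x)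
    [FiniteDimensional ↥(IntermediateField.adjoin k ({x} : Set K)) K]
    [Algebra.IsSeparable ↥(IntermediateField.adjoin k ({x} : Set K)) K]
    (σ : K ≃ₐ[k] K) (hord : (orderOf σ).Prime) (hσx : σ x ≠ x) :
    ∃ h : K, σ h = h ∧
      h ^ p ∉ Set.range (algebraMap k K) ∧
      IntermediateField.adjoin k ({x, h ^ p} : Set K) = ⊤ ∧
      h ^ p ∉ Submodule.span k ({1, x} : Set K) := by
  classical
  haveI hpK : CharP K p := charP_of_injective_algebraMap (algebraMap k K).injective p
  have hpp : p.Prime := (CharP.char_is_prime_or_zero k p).resolve_right (by omega)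
  haveI : Fact p.Prime := ⟨hpp⟩
  obtain ⟨S, hmemS, hfd, hrank⟩ := aux1 k K σ hord
  haveI := hfd
  have hxS : x ∉ S := fun hmem => hσx ((hmemS x).mp hmem)
  have hgen : ∀ a : K, a ∈ IntermediateField.adjoin ↥S ({x} : Set K) :=
    aux2 K S (by rw [hrank]; exact hord) x hxS
  set L := IntermediateField.adjoin k ({x} : Set K) with hLdef
  haveI : Algebra.IsAlgebraic ↥L K := Algebra.IsAlgebraic.of_finite ↥L K
  haveI : Finite (IntermediateField ↥L K) :=
    Field.finite_intermediateField_of_exists_primitive_element ↥L K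
      (Field.exists_primitive_element ↥L K)
  have hkL : ∀ (N : IntermediateField ↥L K) (d : k), algebraMap k K d ∈ N := by
    intro N d
    have h1 : algebraMap k K d ∈ L := L.algebraMap_mem d
    have h2 : algebraMap k K d = algebraMap ↥L K ⟨algebraMap k K d, h1⟩ := rfl
    rw [h2]; exact N.algebraMap_mem _
  set Φ : Set (IntermediateField ↥L K) :=
    {N | ∃ θ : K, σ θ = θ ∧ N = IntermediateField.adjoin ↥L ({θ} : Set K)} with hΦ
  have hΦne : Φ.Nonempty := ⟨_, 1, map_one σ, rfl⟩
  obtain ⟨M, hMΦ, hMmax⟩ := Set.Finite.exists_maximalFor id Φ Φ.toFinite hΦne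
  obtain ⟨θ₁, hθ₁fix, hMdef⟩ := hMΦ
  have hFM : ∀ θ : K, σ θ = θ → θ ∈ M := by
    intro θ hθ
    have hfixc : ∀ c : k, σ (θ₁ + algebraMap k K c * θ) = θ₁ + algebraMap k K c * θ := by
      intro c; rw [map_add, map_mul, hθ₁fix, hθ, AlgEquiv.commutes]
    obtain ⟨c, c', hcc', hNeq⟩ := Finite.exists_ne_map_eq_of_infinite
      (fun c : k => IntermediateField.adjoin ↥L ({θ₁ + algebraMap k K c * θ} : Set K))
    set N := IntermediateField.adjoin ↥L ({θ₁ + algebraMap k K c * θ} : Set K) with hN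
    have h1 : θ₁ + algebraMap k K c * θ ∈ N := IntermediateField.subset_adjoin _ _ rfl
    have h2 : θ₁ + algebraMap k K c' * θ ∈ N := by
      rw [hNeq]; exact IntermediateField.subset_adjoin _ _ rfl
    have hsub : (algebraMap k K c - algebraMap k K c') * θ ∈ N := by
      have h3 := N.sub_mem h1 h2
      have h4 : θ₁ + algebraMap k K c * θ - (θ₁ + algebraMap k K c' * θ)
          = (algebraMap k K c - algebraMap k K c') * θ := by ring
      rwa [h4] at h3
    have hcne : algebraMap k K c - algebraMap k K c' ≠ 0 := by
      rw [← map_sub]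
      intro h0
      exact hcc' (sub_eq_zero.mp ((algebraMap k K).injective (by rw [h0, map_zero])))
    have hθN : θ ∈ N := by
      have hccN : algebraMap k K c - algebraMap k K c' ∈ N := by
        rw [← map_sub]; exact hkL N _
      have hmem := N.mul_mem (N.inv_mem hccN) hsub
      rwa [inv_mul_cancel_left₀ hcne] at hmem
    have hθ₁N : θ₁ ∈ N := by
      have h5 := N.sub_mem h1 (N.mul_mem (hkL N c) hθN)
      simpa using h5
    have hMN : M ≤ N := by
      rw [hMdef]
      exact IntermediateField.adjoin_le_iff.mpr (Set.singleton_subset_iff.mpr hθ₁N)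
    have hMeqN : M = N := le_antisymm hMN (hMmax ⟨_, hfixc c, rfl⟩ hMN)
    rw [hMeqN]; exact hθN
  have hMtop : ∀ a : K, a ∈ M := by
    intro a
    refine IntermediateField.adjoin_induction ↥S (p := fun b _ => b ∈ M) ?_ ?_ ?_ ?_ ?_ (hgen a)
    · rintro b hb
      rw [Set.mem_singleton_iff] at hb
      rw [hb]
      have hxL : x ∈ L := IntermediateField.subset_adjoin _ _ rfl
      have h2 : x = algebraMap ↥L K ⟨x, hxL⟩ := rfl
      rw [h2]; exact M.algebraMap_mem _
    · intro s
      exact hFM _ ((hmemS _).mp s.2)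
    · intro a b _ _ ha hb; exact M.add_mem ha hb
    · intro a _ ha; exact M.inv_mem ha
    · intro a b _ _ ha hb; exact M.mul_mem ha hb
  have hex : ∃ h : K, σ h = h ∧ h ∉ Set.range (algebraMap k K) ∧
      ∀ a : K, a ∈ IntermediateField.adjoin ↥L ({h} : Set K) := by
    by_cases hθ₁k : θ₁ ∈ Set.range (algebraMap k K)
    · have hθ₀ : ∃ θ₀ : K, σ θ₀ = θ₀ ∧ θ₀ ∉ Set.range (algebraMap k K) := by
        by_contra hcon
        push_neg at hcon
        letI : Algebra k ↥S := ((algebraMap k K).codRestrict S.toSubring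
          (fun c => (hmemS _).mpr (σ.commutes c))).toAlgebra
        haveI : IsScalarTower k ↥S K := IsScalarTower.of_algebraMap_eq (fun c => rfl)
        haveI : Algebra.IsAlgebraic ↥S K := Algebra.IsAlgebraic.of_finite ↥S K
        haveI : Algebra.IsAlgebraic k ↥S := by
          constructor
          intro s
          obtain ⟨c, hc⟩ := hcon ↑s ((hmemS _).mp s.2)
          have hcs : algebraMap k ↥S c = s := Subtype.ext hc
          rw [← hcs]
          exact isAlgebraic_algebraMap c
        haveI : Algebra.IsAlgebraic k K := Algebra.IsAlgebraic.trans k ↥S K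
        exact hx (Algebra.IsAlgebraic.isAlgebraic x)
      obtain ⟨θ₀, hθ₀fix, hθ₀k⟩ := hθ₀
      refine ⟨θ₁ + θ₀, by rw [map_add, hθ₁fix, hθ₀fix], ?_, ?_⟩
      · rintro ⟨d, hd⟩
        obtain ⟨c, hc⟩ := hθ₁k
        exact hθ₀k ⟨d - c, by rw [map_sub, hc, hd]; ring⟩
      · intro a
        have hθ₁mem : θ₁ ∈ IntermediateField.adjoin ↥L ({θ₁ + θ₀} : Set K) := by
          obtain ⟨c, hc⟩ := hθ₁k
          rw [← hc]; exact hkL _ c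
        have hle : M ≤ IntermediateField.adjoin ↥L ({θ₁ + θ₀} : Set K) := by
          rw [hMdef]
          exact IntermediateField.adjoin_le_iff.mpr (Set.singleton_subset_iff.mpr hθ₁mem)
        exact hle (hMtop a)
    · exact ⟨θ₁, hθ₁fix, hθ₁k, fun a => hMdef ▸ hMtop a⟩
  obtain ⟨h, hfix, hnotk, htop⟩ := hex
  have hyknot : h ^ p ∉ Set.range (algebraMap k K) := by
    rintro ⟨a, ha⟩
    obtain ⟨c, hc⟩ := IsAlgClosed.exists_pow_nat_eq a hp
    apply hnotk
    have h1 : frobenius K p (algebraMap k K c) = frobenius K p h := by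
      rw [frobenius_def, frobenius_def, ← map_pow, hc, ha]
    exact ⟨c, frobenius_inj K p h1⟩
  set T := IntermediateField.adjoin k ({x, h ^ p} : Set K) with hT
  have hxT : x ∈ T := IntermediateField.subset_adjoin _ _ (Or.inl rfl)
  have hyT : h ^ p ∈ T := IntermediateField.subset_adjoin _ _ (Or.inr rfl)
  have hLT : L ≤ T := by
    rw [hLdef]
    exact IntermediateField.adjoin_le_iff.mpr (Set.singleton_subset_iff.mpr hxT)
  have hhT : h ∈ T := aux3 p L T hLT h hyT
  have hTtop : T = ⊤ := by
    rw [eq_top_iff]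
    intro a _
    refine IntermediateField.adjoin_induction ↥L (p := fun b _ => b ∈ T) ?_ ?_ ?_ ?_ ?_ (htop a)
    · rintro b hb
      rw [Set.mem_singleton_iff] at hb
      rw [hb]
      exact hhT
    · intro l; exact hLT l.2
    · intro a b _ _ ha hb; exact T.add_mem ha hb
    · intro a _ ha; exact T.inv_mem ha
    · intro a b _ _ ha hb; exact T.mul_mem ha hb
  refine ⟨h, hfix, hyknot, hTtop, ?_⟩
  intro hspan
  rw [Submodule.mem_span_pair] at hspan
  obtain ⟨a, b, hab⟩ := hspan
  rw [Algebra.smul_def, Algebra.smul_def, mul_one] at hab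
  by_cases hb : b = 0
  · apply hyknot
    refine ⟨a, ?_⟩
    rw [← hab, hb, map_zero, zero_mul, add_zero]
  · apply hσx
    have h1 : σ (algebraMap k K a + algebraMap k K b * x)
        = algebraMap k K a + algebraMap k K b * σ x := by
      rw [map_add, map_mul, AlgEquiv.commutes, AlgEquiv.commutes]
    rw [hab, map_pow, hfix] at h1
    rw [← hab] at h1
    have h2 : algebraMap k K b * x = algebraMap k K b * σ x := by
      exact add_left_cancel h1
    have hb' : algebraMap k K b ≠ 0 := fun h0 =>
      hb ((algebraMap k K).injective (by rw [h0, map_zero]))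
    exact (mul_left_cancel₀ hb' h2).symm
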